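/- (Theorem 4, completeness part.) Let (f, λ, μ, φ) be a spatially homogeneous regular solution of the surface-symmetric Einstein–Vlasov–scalar field system in areal coordinates on [1,∞) with k ∈ {0, −1}. Let τ ↦ (t(τ), r(τ), w(τ), F) be a maximally extended future-directed timelike (m > 0) or null (m = 0, p⁰ > 0) geodesic with t(τ₀) = 1, satisfying dt/dτ = e^{−μ}√(m² + w² + F/t²), dw/dτ = −λ'(t)·p⁰·w, dF/dτ = 0. Then the proper time integral ∫₁^∞ e^{μ(t)} (m² + w(t)² + F/t²)^{−1/2} dt diverges, i.e., τ₊ = +∞: the spacetime is timelike and null geodesically complete in the expanding direction. -/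

import Mathlib

open MeasureTheory Real Filter

noncomputable section

/-- The energy density ρ of a spatially homogeneous solution. -/
def rhoH (mu phi : ℝ → ℝ) (f : ℝ → ℝ → ℝ → ℝ) (t : ℝ) : ℝ :=
  Real.pi / t ^ 2 *
      (∫ w : ℝ, ∫ F in Set.Ioi (0 : ℝ), Real.sqrt (1 + w ^ 2 + F / t ^ 2) * f t w F)
    + (1 / 2) * Real.exp (-2 * mu t) * (deriv phi t) ^ 2

/-- The radial pressure p of a spatially homogeneous solution. -/
def pH (mu phi : ℝ → ℝ) (f : ℝ → ℝ → ℝ → ℝ) (t : ℝ) : ℝ :=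
  Real.pi / t ^ 2 *
      (∫ w : ℝ, ∫ F in Set.Ioi (0 : ℝ),
        w ^ 2 / Real.sqrt (1 + w ^ 2 + F / t ^ 2) * f t w F)
    + (1 / 2) * Real.exp (-2 * mu t) * (deriv phi t) ^ 2

/-- The tangential pressure q of a spatially homogeneous solution. -/
def qH (mu phi : ℝ → ℝ) (f : ℝ → ℝ → ℝ → ℝ) (t : ℝ) : ℝ :=
  Real.pi / t ^ 4 *
      (∫ w : ℝ, ∫ F in Set.Ioi (0 : ℝ),
        F / Real.sqrt (1 + w ^ 2 + F / t ^ 2) * f t w F)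
    + Real.exp (-2 * mu t) * (deriv phi t) ^ 2

/-- Membership in the time domain `[1, T)` (with `T ≤ ∞` an extended real). -/
def InDom (T : EReal) (t : ℝ) : Prop := 1 ≤ t ∧ (t : EReal) < T

/-- A spatially homogeneous regular solution of the surface-symmetric
Einstein–Vlasov–scalar field system in areal coordinates on `[1, T)` with
curvature parameter `k`: all unknowns depend only on `t` (and `(w, F)` for `f`),
and the reduced Vlasov, Einstein and wave equations hold. In this situation the
momentum density `j` vanishes. -/
structure IsEVSHom (k : ℝ) (T : EReal) (lam mu phi : ℝ → ℝ)
    (f : ℝ → ℝ → ℝ → ℝ) : Prop where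
  hT : (1 : EReal) < T
  f_nonneg : ∀ t w F, 0 ≤ f t w F
  supp_bdd : ∀ T' : ℝ, 1 ≤ T' → (T' : EReal) < T →
    ∃ C : ℝ, ∀ t w F, 1 ≤ t → t ≤ T' → f t w F ≠ 0 → |w| ≤ C ∧ F ≤ C
  reg_lam : ∀ t, InDom T t → DifferentiableAt ℝ lam t
  reg_mu : ∀ t, InDom T t → DifferentiableAt ℝ mu t
  reg_phi : ∀ t, InDom T t → DifferentiableAt ℝ phi t
  reg_phi' : ∀ t, InDom T t → DifferentiableAt ℝ (deriv phi) t
  reg_f : ∀ t w F, InDom T t → 0 ≤ F →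
    DifferentiableAt ℝ (fun s => f s w F) t ∧ DifferentiableAt ℝ (fun v => f t v F) w
  vlasov : ∀ t w F, InDom T t → 0 ≤ F →
    deriv (fun s => f s w F) t - deriv lam t * w * deriv (fun v => f t v F) w = 0
  ee1 : ∀ t, InDom T t →
    Real.exp (-2 * mu t) * (2 * t * deriv lam t + 1) + k
      = 8 * Real.pi * t ^ 2 * rhoH mu phi f t
  ee2 : ∀ t, InDom T t →
    Real.exp (-2 * mu t) * (2 * t * deriv mu t - 1) - k
      = 8 * Real.pi * t ^ 2 * pH mu phi f t
  wave : ∀ t, InDom T t →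
    deriv (deriv phi) t + (deriv lam t - deriv mu t + 2 / t) * deriv phi t = 0

/-- The geodesic system in a spatially homogeneous surface-symmetric spacetime,
on the parameter interval `(a, b)`; `F` is conserved. -/
def GeoSysH (lam mu : ℝ → ℝ) (m F : ℝ) (a b : EReal) (tt ww : ℝ → ℝ) : Prop :=
  ∀ τ : ℝ, a < (τ : EReal) → (τ : EReal) < b →
    HasDerivAt tt
      (Real.exp (-(mu (tt τ))) * Real.sqrt (m ^ 2 + ww τ ^ 2 + F / tt τ ^ 2)) τ
    ∧ HasDerivAt ww
      (-(deriv lam (tt τ))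
        * (Real.exp (-(mu (tt τ))) * Real.sqrt (m ^ 2 + ww τ ^ 2 + F / tt τ ^ 2))
        * ww τ) τ

/-- A homogeneous geodesic on `(a, b)` is maximally extended to the future if it
is not the restriction of a geodesic on `(a, b')` with `b' > b`. -/
def GeoRightMaxH (lam mu : ℝ → ℝ) (m F : ℝ) (a b : EReal) (tt ww : ℝ → ℝ) : Prop :=
  GeoSysH lam mu m F a b tt ww ∧
  ∀ (b' : EReal) (tt' ww' : ℝ → ℝ), b < b' →
    GeoSysH lam mu m F a b' tt' ww' →
    ¬ (∀ τ : ℝ, a < (τ : EReal) → (τ : EReal) < b → tt' τ = tt τ ∧ ww' τ = ww τ)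

section Aux
variable {k : ℝ} {lam mu phi : ℝ → ℝ} {f : ℝ → ℝ → ℝ → ℝ}

lemma indom_top {t : ℝ} (ht : 1 ≤ t) : InDom ⊤ t := ⟨ht, EReal.coe_lt_top t⟩

lemma rhoH_nonneg (hf : ∀ t w F, 0 ≤ f t w F) (t : ℝ) : 0 ≤ rhoH mu phi f t := by
  have h1 : 0 ≤ ∫ w : ℝ, ∫ F in Set.Ioi (0 : ℝ),
      Real.sqrt (1 + w ^ 2 + F / t ^ 2) * f t w F := by
    apply integral_nonneg; intro w
    apply integral_nonneg; intro F
    exact mul_nonneg (Real.sqrt_nonneg _) (hf t w F)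
  have h2 : (0:ℝ) ≤ Real.pi / t ^ 2 := div_nonneg Real.pi_pos.le (sq_nonneg t)
  exact add_nonneg (mul_nonneg h2 h1) (by positivity)

lemma pH_nonneg (hf : ∀ t w F, 0 ≤ f t w F) (t : ℝ) : 0 ≤ pH mu phi f t := by
  have h1 : 0 ≤ ∫ w : ℝ, ∫ F in Set.Ioi (0 : ℝ),
      w ^ 2 / Real.sqrt (1 + w ^ 2 + F / t ^ 2) * f t w F := by
    apply integral_nonneg; intro w
    apply integral_nonneg; intro F
    exact mul_nonneg (div_nonneg (sq_nonneg w) (Real.sqrt_nonneg _)) (hf t w F)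
  have h2 : (0:ℝ) ≤ Real.pi / t ^ 2 := div_nonneg Real.pi_pos.le (sq_nonneg t)
  exact add_nonneg (mul_nonneg h2 h1) (by positivity)

/-- Lower bound for `e^{μ}` on `[1, ∞)`. -/
lemma exp_mu_lower (hk : k = 0 ∨ k = -1) (h : IsEVSHom k ⊤ lam mu phi f)
    {t : ℝ} (ht : 1 ≤ t) :
    Real.sqrt (Real.exp (-2 * mu 1) + 1)⁻¹ ≤ Real.exp (mu t) := by
  -- the auxiliary function u s = s e^{-2μ(s)} + k s is antitone on [1,∞)
  set u : ℝ → ℝ := fun s => s * Real.exp (-2 * mu s) + k * s with hu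
  have hder : ∀ s : ℝ, 1 ≤ s → HasDerivAt u
      (Real.exp (-2 * mu s) * (1 - 2 * s * deriv mu s) + k) s := by
    intro s hs
    have hmu : HasDerivAt mu (deriv mu s) s := (h.reg_mu s (indom_top hs)).hasDerivAt
    have h1 : HasDerivAt (fun x => Real.exp (-2 * mu x))
        (Real.exp (-2 * mu s) * (-2 * deriv mu s)) s := (hmu.const_mul (-2)).exp
    have h2 : HasDerivAt (fun x : ℝ => x * Real.exp (-2 * mu x))
        (1 * Real.exp (-2 * mu s) + s * (Real.exp (-2 * mu s) * (-2 * deriv mu s))) s :=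
      (hasDerivAt_id s).mul h1
    have h3 := h2.add ((hasDerivAt_id s).const_mul k)
    exact h3.congr_deriv (by ring)
  have hderle : ∀ s : ℝ, 1 < s → deriv u s ≤ 0 := by
    intro s hs
    rw [(hder s hs.le).deriv]
    have he2 := h.ee2 s (indom_top hs.le)
    have hple : 0 ≤ pH mu phi f s := pH_nonneg h.f_nonneg s
    have hpi : (0:ℝ) ≤ 8 * Real.pi * s ^ 2 * pH mu phi f s := by positivity
    nlinarith [he2]
  have hanti : AntitoneOn u (Set.Ici (1:ℝ)) := by
    apply antitoneOn_of_deriv_nonpos (convex_Ici 1)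
    · exact fun s hs => ((hder s hs).continuousAt).continuousWithinAt
    · intro s hs
      rw [interior_Ici] at hs
      exact ((hder s hs.le).differentiableAt).differentiableWithinAt
    · intro s hs
      rw [interior_Ici] at hs
      exact hderle s hs
  have hle : u t ≤ u 1 := hanti (Set.mem_Ici.2 le_rfl) (Set.mem_Ici.2 ht) ht
  -- extract e^{-2μ(t)} ≤ e^{-2μ(1)} + 1
  have hA : Real.exp (-2 * mu t) ≤ Real.exp (-2 * mu 1) + 1 := by
    have h0 : (0:ℝ) < t := lt_of_lt_of_le one_pos ht
    have hE : (0:ℝ) ≤ Real.exp (-2 * mu 1) := (Real.exp_pos _).le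
    rcases hk with hk | hk <;> simp only [hu, hk] at hle <;> nlinarith
  -- conclude
  have h2mu : (Real.exp (-2 * mu 1) + 1)⁻¹ ≤ Real.exp (2 * mu t) := by
    have h1 : Real.exp (-(2 * mu t)) ≤ Real.exp (-2 * mu 1) + 1 := by
      rw [neg_mul] at hA; exact hA
    rw [Real.exp_neg] at h1
    have hEp : (0:ℝ) < Real.exp (2 * mu t) := Real.exp_pos _
    have hCp : (0:ℝ) < Real.exp (-2 * mu 1) + 1 := by positivity
    rw [inv_le_comm₀ hCp hEp]
    exact h1
  have := Real.sqrt_le_sqrt h2mu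
  calc Real.sqrt (Real.exp (-2 * mu 1) + 1)⁻¹ ≤ Real.sqrt (Real.exp (2 * mu t)) := this
    _ = Real.exp (mu t) := by
        rw [two_mul, Real.exp_add, Real.sqrt_mul_self (Real.exp_nonneg _)]

end Aux
section Aux2
variable {k : ℝ} {lam mu phi : ℝ → ℝ} {f : ℝ → ℝ → ℝ → ℝ}

/-- `e^{λ(1) - λ(t)} ≤ √t` on `[1, ∞)`. -/
lemma exp_lam_bound (hk : k = 0 ∨ k = -1) (h : IsEVSHom k ⊤ lam mu phi f)
    {t : ℝ} (ht : 1 ≤ t) :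
    Real.exp (lam 1 - lam t) ≤ Real.sqrt t := by
  set v : ℝ → ℝ := fun s => 2 * lam s + Real.log s with hv
  have hder : ∀ s : ℝ, 1 ≤ s → HasDerivAt v (2 * deriv lam s + s⁻¹) s := by
    intro s hs
    have hlam : HasDerivAt lam (deriv lam s) s := (h.reg_lam s (indom_top hs)).hasDerivAt
    exact (hlam.const_mul 2).add (Real.hasDerivAt_log (by linarith))
  have hderge : ∀ s : ℝ, 1 < s → 0 ≤ deriv v s := by
    intro s hs
    rw [(hder s hs.le).deriv]
    have he1 := h.ee1 s (indom_top hs.le)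
    have hrho : 0 ≤ rhoH mu phi f s := rhoH_nonneg h.f_nonneg s
    have hpi : (0:ℝ) ≤ 8 * Real.pi * s ^ 2 * rhoH mu phi f s := by positivity
    have hE : (0:ℝ) < Real.exp (-2 * mu s) := Real.exp_pos _
    have hkey : 0 ≤ 2 * s * deriv lam s + 1 := by
      have h0 : 0 ≤ Real.exp (-2 * mu s) * (2 * s * deriv lam s + 1) := by
        rcases hk with hk | hk <;> rw [hk] at he1 <;> nlinarith
      exact nonneg_of_mul_nonneg_right h0 hE
    have hs0 : (0:ℝ) < s := by linarith
    have : s * (2 * deriv lam s + s⁻¹) = 2 * s * deriv lam s + 1 := by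
      field_simp
    nlinarith [this]
  have hmono : MonotoneOn v (Set.Ici (1:ℝ)) := by
    apply monotoneOn_of_deriv_nonneg (convex_Ici 1)
    · exact fun s hs => ((hder s hs).continuousAt).continuousWithinAt
    · intro s hs
      rw [interior_Ici] at hs
      exact ((hder s hs.le).differentiableAt).differentiableWithinAt
    · intro s hs
      rw [interior_Ici] at hs
      exact hderge s hs
  have hle : v 1 ≤ v t := hmono (Set.mem_Ici.2 le_rfl) (Set.mem_Ici.2 ht) ht
  have ht0 : (0:ℝ) < t := by linarith
  have hlog : lam 1 - lam t ≤ Real.log t / 2 := by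
    simp only [hv, Real.log_one] at hle
    linarith
  have hsq : Real.sqrt t = Real.exp (Real.log t / 2) := by
    rw [← Real.log_sqrt ht0.le, Real.exp_log (Real.sqrt_pos.2 ht0)]
  rw [hsq]
  exact Real.exp_le_exp.2 hlog

end Aux2
/-- The conserved-quantity formula for `w` along the geodesic, extended to all of `ℝ`. -/
def Wfn (lam : ℝ → ℝ) (w₀ t : ℝ) : ℝ := w₀ * Real.exp (lam 1 - lam (max t 1))

/-- The quantity under the square root, extended to all of `ℝ`. -/
def Pfn (lam : ℝ → ℝ) (m F w₀ t : ℝ) : ℝ :=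
  m ^ 2 + Wfn lam w₀ t ^ 2 + F / (max t 1) ^ 2

/-- The integrand `e^{μ}/√(m² + w² + F/t²)`, extended to all of `ℝ`. -/
def ign (lam mu : ℝ → ℝ) (m F w₀ t : ℝ) : ℝ :=
  Real.exp (mu (max t 1)) / Real.sqrt (Pfn lam m F w₀ t)

/-- The primitive of the integrand, based at `1`. -/
def Gn (lam mu : ℝ → ℝ) (m F w₀ x : ℝ) : ℝ := ∫ t in (1:ℝ)..x, ign lam mu m F w₀ t

section Aux3
variable {k : ℝ} {lam mu phi : ℝ → ℝ} {f : ℝ → ℝ → ℝ → ℝ} {m F w₀ : ℝ}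

lemma Pfn_pos (hF : 0 ≤ F) (hpos : 0 < m ^ 2 + w₀ ^ 2 + F) (t : ℝ) :
    0 < Pfn lam m F w₀ t := by
  have hmax : (0:ℝ) < max t 1 := lt_of_lt_of_le one_pos (le_max_right t 1)
  have hFd : 0 ≤ F / (max t 1) ^ 2 := by positivity
  by_cases hm : m = 0
  · by_cases hw : w₀ = 0
    · have hFpos : 0 < F := by rw [hm, hw] at hpos; nlinarith
      have : 0 < F / (max t 1) ^ 2 := by positivity
      unfold Pfn; nlinarith [sq_nonneg (Wfn lam w₀ t)]
    · have : Wfn lam w₀ t ≠ 0 := mul_ne_zero hw (Real.exp_ne_zero _)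
      have h2 : 0 < Wfn lam w₀ t ^ 2 := by
        have := pow_pos (abs_pos.2 this) 2
        rwa [sq_abs] at this
      unfold Pfn; nlinarith [sq_nonneg m]
  · have : 0 < m ^ 2 := by
      have := pow_pos (abs_pos.2 hm) 2
      rwa [sq_abs] at this
    unfold Pfn; nlinarith [sq_nonneg (Wfn lam w₀ t), hFd]

lemma contAt_comp_max {g : ℝ → ℝ} (hc : ∀ s : ℝ, 1 ≤ s → ContinuousAt g s) :
    Continuous (fun t : ℝ => g (max t 1)) := by
  rw [continuous_iff_continuousAt]
  intro t
  have h1 : ContinuousAt (fun s : ℝ => max s 1) t :=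
    (continuous_id.max continuous_const).continuousAt
  exact ContinuousAt.comp (hc (max t 1) (le_max_right t 1)) h1

lemma ign_cont (h : IsEVSHom k ⊤ lam mu phi f) (hF : 0 ≤ F)
    (hpos : 0 < m ^ 2 + w₀ ^ 2 + F) : Continuous (ign lam mu m F w₀) := by
  have hmu : Continuous (fun t : ℝ => mu (max t 1)) :=
    contAt_comp_max fun s hs => (h.reg_mu s (indom_top hs)).continuousAt
  have hlam : Continuous (fun t : ℝ => lam (max t 1)) :=
    contAt_comp_max fun s hs => (h.reg_lam s (indom_top hs)).continuousAt
  have hW : Continuous (Wfn lam w₀) := by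
    unfold Wfn
    exact continuous_const.mul ((continuous_const.sub hlam).rexp)
  have hmax : Continuous (fun t : ℝ => max t 1) := continuous_id.max continuous_const
  have hP : Continuous (Pfn lam m F w₀) := by
    unfold Pfn
    refine (continuous_const.add (hW.pow 2)).add ?_
    refine continuous_const.div (hmax.pow 2) fun t => ?_
    have : (0:ℝ) < max t 1 := lt_of_lt_of_le one_pos (le_max_right t 1)
    positivity
  unfold ign
  exact (hmu.rexp).div (hP.sqrt) fun t =>
    ne_of_gt (Real.sqrt_pos.2 (Pfn_pos hF hpos t))

lemma ign_pos (hF : 0 ≤ F) (hpos : 0 < m ^ 2 + w₀ ^ 2 + F) (t : ℝ) :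
    0 < ign lam mu m F w₀ t :=
  div_pos (Real.exp_pos _) (Real.sqrt_pos.2 (Pfn_pos hF hpos t))

lemma Gn_hasDerivAt (h : IsEVSHom k ⊤ lam mu phi f) (hF : 0 ≤ F)
    (hpos : 0 < m ^ 2 + w₀ ^ 2 + F) (x : ℝ) :
    HasDerivAt (Gn lam mu m F w₀) (ign lam mu m F w₀ x) x := by
  have hc := ign_cont h hF hpos
  exact intervalIntegral.integral_hasDerivAt_right (hc.intervalIntegrable 1 x)
    (hc.stronglyMeasurableAtFilter volume (nhds x)) hc.continuousAt

lemma Gn_strictMono (h : IsEVSHom k ⊤ lam mu phi f) (hF : 0 ≤ F)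
    (hpos : 0 < m ^ 2 + w₀ ^ 2 + F) : StrictMono (Gn lam mu m F w₀) := by
  apply strictMono_of_deriv_pos
  intro x
  rw [(Gn_hasDerivAt h hF hpos x).deriv]
  exact ign_pos hF hpos x

lemma Gn_one : Gn lam mu m F w₀ 1 = 0 := intervalIntegral.integral_same

end Aux3
section Aux4
variable {k : ℝ} {lam mu phi : ℝ → ℝ} {f : ℝ → ℝ → ℝ → ℝ} {m F w₀ : ℝ}

lemma ign_lower (hk : k = 0 ∨ k = -1) (h : IsEVSHom k ⊤ lam mu phi f)
    (hF : 0 ≤ F) (hpos : 0 < m ^ 2 + w₀ ^ 2 + F) {t : ℝ} (ht : 1 ≤ t) :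
    Real.sqrt (Real.exp (-2 * mu 1) + 1)⁻¹
      / (Real.sqrt (m ^ 2 + w₀ ^ 2 + F) * Real.sqrt t) ≤ ign lam mu m F w₀ t := by
  have hmax : max t 1 = t := max_eq_left ht
  have ht0 : (0:ℝ) < t := lt_of_lt_of_le one_pos ht
  have hPle : Pfn lam m F w₀ t ≤ (m ^ 2 + w₀ ^ 2 + F) * t := by
    unfold Pfn Wfn
    rw [hmax]
    have h1 : Real.exp (lam 1 - lam t) ≤ Real.sqrt t := exp_lam_bound hk h ht
    have h2 : Real.exp (lam 1 - lam t) ^ 2 ≤ t := by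
      have := mul_le_mul h1 h1 (Real.exp_nonneg _) (Real.sqrt_nonneg _)
      rwa [Real.mul_self_sqrt ht0.le, ← sq] at this
    have h3 : (w₀ * Real.exp (lam 1 - lam t)) ^ 2 ≤ w₀ ^ 2 * t := by
      rw [mul_pow]
      exact mul_le_mul_of_nonneg_left h2 (sq_nonneg _)
    have h4 : F / t ^ 2 ≤ F := by
      apply div_le_self hF
      nlinarith
    nlinarith [sq_nonneg m, sq_nonneg w₀]
  have hsqle : Real.sqrt (Pfn lam m F w₀ t)
      ≤ Real.sqrt (m ^ 2 + w₀ ^ 2 + F) * Real.sqrt t := by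
    rw [← Real.sqrt_mul hpos.le]
    exact Real.sqrt_le_sqrt hPle
  have hnum : Real.sqrt (Real.exp (-2 * mu 1) + 1)⁻¹ ≤ Real.exp (mu (max t 1)) := by
    rw [hmax]; exact exp_mu_lower hk h ht
  unfold ign
  exact div_le_div₀ (Real.exp_nonneg _) hnum (Real.sqrt_pos.2 (Pfn_pos hF hpos t)) hsqle

lemma sqrt_tendsto_atTop : Filter.Tendsto Real.sqrt Filter.atTop Filter.atTop := by
  have h := tendsto_rpow_atTop (y := (1:ℝ)/2) (by norm_num)
  refine h.congr' ?_
  filter_upwards [Filter.eventually_ge_atTop (0:ℝ)] with x hx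
  rw [Real.sqrt_eq_rpow]

lemma Gn_tendsto (hk : k = 0 ∨ k = -1) (h : IsEVSHom k ⊤ lam mu phi f)
    (hF : 0 ≤ F) (hpos : 0 < m ^ 2 + w₀ ^ 2 + F) :
    Filter.Tendsto (Gn lam mu m F w₀) Filter.atTop Filter.atTop := by
  set c : ℝ := Real.sqrt (Real.exp (-2 * mu 1) + 1)⁻¹ with hc
  set K : ℝ := Real.sqrt (m ^ 2 + w₀ ^ 2 + F) with hK
  have hcpos : 0 < c := Real.sqrt_pos.2 (by positivity)
  have hKpos : 0 < K := Real.sqrt_pos.2 hpos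
  have hcK : 0 < c / K := div_pos hcpos hKpos
  -- the comparison integral
  have hlow : ∀ x : ℝ, 1 ≤ x →
      c / K * (2 * Real.sqrt x) - c / K * (2 * Real.sqrt 1) ≤ Gn lam mu m F w₀ x := by
    intro x hx
    have huIcc : Set.uIcc (1:ℝ) x = Set.Icc 1 x := Set.uIcc_of_le hx
    have hder : ∀ t ∈ Set.uIcc (1:ℝ) x,
        HasDerivAt (fun s : ℝ => c / K * (2 * Real.sqrt s)) (c / (K * Real.sqrt t)) t := by
      intro t htx
      rw [huIcc] at htx
      have ht1 : (1:ℝ) ≤ t := htx.1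
      have ht0 : t ≠ 0 := by linarith
      have hs := (Real.hasDerivAt_sqrt ht0).const_mul (c / K * 2)
      have hsq0 : Real.sqrt t ≠ 0 := ne_of_gt (Real.sqrt_pos.2 (by linarith))
      have hfun : (fun s : ℝ => c / K * (2 * Real.sqrt s)) = fun y => c / K * 2 * Real.sqrt y := by
        funext s; ring
      rw [hfun]
      have hK0 : K ≠ 0 := hKpos.ne'
      exact hs.congr_deriv (by field_simp)
    have hcont2 : ContinuousOn (fun t : ℝ => c / (K * Real.sqrt t)) (Set.uIcc 1 x) := by
      rw [huIcc]
      apply ContinuousOn.div continuousOn_const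
      · exact (continuousOn_const.mul (Real.continuous_sqrt.continuousOn))
      · intro t htx
        have : (0:ℝ) < Real.sqrt t := Real.sqrt_pos.2 (by linarith [htx.1])
        positivity
    have hint2 : IntervalIntegrable (fun t : ℝ => c / (K * Real.sqrt t)) volume 1 x :=
      hcont2.intervalIntegrable
    have heq : ∫ t in (1:ℝ)..x, c / (K * Real.sqrt t)
        = c / K * (2 * Real.sqrt x) - c / K * (2 * Real.sqrt 1) :=
      intervalIntegral.integral_eq_sub_of_hasDerivAt hder hint2
    rw [← heq]
    apply intervalIntegral.integral_mono_on hx hint2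
      ((ign_cont h hF hpos).intervalIntegrable 1 x)
    intro t htx
    have hb := ign_lower hk h hF hpos (t := t) htx.1
    calc c / (K * Real.sqrt t) = c / (K * Real.sqrt t) := rfl
      _ ≤ ign lam mu m F w₀ t := by rw [div_mul_eq_div_div] at hb ⊢; exact hb
  -- tendsto of the lower bound
  have h1 : Filter.Tendsto (fun x : ℝ => c / K * (2 * Real.sqrt x)) Filter.atTop
      Filter.atTop := by
    have := (sqrt_tendsto_atTop.const_mul_atTop (by positivity : (0:ℝ) < c / K * 2))
    exact this.congr fun x => by ring
  have h2 : Filter.Tendsto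
      (fun x : ℝ => c / K * (2 * Real.sqrt x) - c / K * (2 * Real.sqrt 1))
      Filter.atTop Filter.atTop := by
    simpa [sub_eq_add_neg] using
      Filter.tendsto_atTop_add_const_right Filter.atTop (-(c / K * (2 * Real.sqrt 1))) h1
  apply Filter.tendsto_atTop_mono' Filter.atTop ?_ h2
  filter_upwards [Filter.eventually_ge_atTop (1:ℝ)] with x hx
  exact hlow x hx

end Aux4
section Aux5

/-- Surjectivity onto `[0, ∞)` of a continuous function with `G 1 = 0` tending to `∞`. -/
lemma surj_of_tendsto {G : ℝ → ℝ} (hcont : Continuous G) (hG1 : G 1 = 0)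
    (htop : Filter.Tendsto G Filter.atTop Filter.atTop) {y : ℝ} (hy : 0 ≤ y) :
    ∃ t, 1 ≤ t ∧ G t = y := by
  obtain ⟨X, hX⟩ := ((htop.eventually (Filter.eventually_ge_atTop y)).and
    (Filter.eventually_ge_atTop (1:ℝ))).exists
  have hsub := intermediate_value_Icc hX.2 hcont.continuousOn
  have hmem : y ∈ Set.Icc (G 1) (G X) := by
    rw [hG1]; exact ⟨hy, hX.1⟩
  obtain ⟨t, ht, hGt⟩ := hsub hmem
  exact ⟨t, ht.1, hGt⟩

/-- Continuity of the inverse of a strictly monotone function at positive arguments. -/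
lemma invFun_continuousAt {G : ℝ → ℝ} (hsm : StrictMono G)
    (hsurj : ∀ y : ℝ, 0 ≤ y → G (Function.invFun G y) = y) {y : ℝ} (hy : 0 < y) :
    ContinuousAt (Function.invFun G) y := by
  rw [Metric.continuousAt_iff]
  intro ε hε
  set t := Function.invFun G y with htdef
  have hGt : G t = y := hsurj y hy.le
  have hδ1 : 0 < G (t + ε) - y := by
    have := hsm (show t < t + ε by linarith)
    rw [hGt] at this; linarith
  have hδ2 : 0 < y - G (t - ε) := by
    have := hsm (show t - ε < t by linarith)
    rw [hGt] at this; linarith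
  refine ⟨min (min (G (t + ε) - y) (y - G (t - ε))) y, by positivity, ?_⟩
  intro y' hy'
  rw [Real.dist_eq] at hy' ⊢
  have habs := abs_lt.1 hy'
  have hy'0 : 0 < y' := by
    have h1 : min (min (G (t + ε) - y) (y - G (t - ε))) y ≤ y := min_le_right _ _
    linarith [habs.1]
  have hGy' : G (Function.invFun G y') = y' := hsurj y' hy'0.le
  have hmin1 : min (min (G (t + ε) - y) (y - G (t - ε))) y ≤ G (t + ε) - y :=
    le_trans (min_le_left _ _) (min_le_left _ _)
  have hmin2 : min (min (G (t + ε) - y) (y - G (t - ε))) y ≤ y - G (t - ε) :=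
    le_trans (min_le_left _ _) (min_le_right _ _)
  have hlow : G (t - ε) < G (Function.invFun G y') := by
    rw [hGy']; linarith [habs.1]
  have hhigh : G (Function.invFun G y') < G (t + ε) := by
    rw [hGy']; linarith [habs.2]
  have h1 := hsm.lt_iff_lt.1 hlow
  have h2 := hsm.lt_iff_lt.1 hhigh
  rw [abs_lt]
  constructor <;> [linarith; linarith]

end Aux5

/-- Theorem 4, completeness part: spatially homogeneous solutions
with `k ∈ {0, −1}` on `[1, ∞)` are future timelike and null geodesically complete:
along any maximally extended future-directed causal geodesic starting at `t = 1`
the proper time integral diverges and `τ₊ = +∞`. -/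
theorem homogeneous_geodesic_completeness (k : ℝ) (lam mu phi : ℝ → ℝ)
    (f : ℝ → ℝ → ℝ → ℝ) (hk : k = 0 ∨ k = -1)
    (h : IsEVSHom k ⊤ lam mu phi f)
    (m F : ℝ) (hm : 0 ≤ m) (hF : 0 ≤ F)
    (a b : EReal) (tt ww : ℝ → ℝ) (τ₀ : ℝ)
    (hτ₀ : a < (τ₀ : EReal) ∧ (τ₀ : EReal) < b)
    (hgeo : GeoRightMaxH lam mu m F a b tt ww)
    (ht0 : tt τ₀ = 1)
    (hcausal : 0 < m ∨ (m = 0 ∧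
      0 < Real.exp (-(mu 1)) * Real.sqrt (ww τ₀ ^ 2 + F))) :
    b = ⊤
    ∧ ∀ W : ℝ → ℝ,
        (∀ τ : ℝ, a < (τ : EReal) → (τ : EReal) < b → W (tt τ) = ww τ) →
        Filter.Tendsto (fun x => ∫ t in (1 : ℝ)..x,
            Real.exp (mu t) / Real.sqrt (m ^ 2 + W t ^ 2 + F / t ^ 2))
          Filter.atTop Filter.atTop := by
  obtain ⟨ha0, hb0⟩ := hτ₀
  set w₀ : ℝ := ww τ₀ with hw₀def
  -- positivity of m² + w₀² + F
  have hpos : 0 < m ^ 2 + w₀ ^ 2 + F := by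
    rcases hcausal with hm0 | ⟨hm0, hc⟩
    · nlinarith [sq_nonneg w₀]
    · have hE : (0:ℝ) < Real.exp (-(mu 1)) := Real.exp_pos _
      have hs : 0 < Real.sqrt (w₀ ^ 2 + F) := by
        nlinarith [Real.sqrt_nonneg (w₀ ^ 2 + F)]
      have := Real.sqrt_pos.1 hs
      nlinarith
  set ig : ℝ → ℝ := ign lam mu m F w₀ with higdef
  set G : ℝ → ℝ := Gn lam mu m F w₀ with hGdef
  have hGsm : StrictMono G := Gn_strictMono h hF hpos
  have hGd : ∀ x : ℝ, HasDerivAt G (ig x) x := Gn_hasDerivAt h hF hpos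
  have hGtop : Filter.Tendsto G Filter.atTop Filter.atTop := Gn_tendsto hk h hF hpos
  have hG1 : G 1 = 0 := Gn_one
  have hGcont : Continuous G := by
    rw [continuous_iff_continuousAt]; exact fun x => (hGd x).continuousAt
  set Ginv : ℝ → ℝ := Function.invFun G with hGinvdef
  have hGinv_eq : ∀ y : ℝ, 0 ≤ y → G (Ginv y) = y := by
    intro y hy
    obtain ⟨t, _, hGt⟩ := surj_of_tendsto hGcont hG1 hGtop hy
    exact Function.invFun_eq ⟨t, hGt⟩
  have hGinv_left : ∀ t : ℝ, Ginv (G t) = t := fun t =>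
    Function.leftInverse_invFun hGsm.injective t
  have hGinv_gt1 : ∀ y : ℝ, 0 < y → 1 < Ginv y := by
    intro y hy
    by_contra hlt
    push_neg at hlt
    have h1 : G (Ginv y) ≤ G 1 := hGsm.monotone hlt
    rw [hGinv_eq y hy.le, hG1] at h1
    linarith
  have hGinv_deriv : ∀ y : ℝ, 0 < y → HasDerivAt Ginv ((ig (Ginv y))⁻¹) y := by
    intro y hy
    refine HasDerivAt.of_local_left_inverse (invFun_continuousAt hGsm hGinv_eq hy)
      (hGd (Ginv y)) (ne_of_gt (ign_pos hF hpos _)) ?_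
    filter_upwards [Ioi_mem_nhds hy] with y' hy'
    exact hGinv_eq y' (le_of_lt hy')
  -- geodesic facts
  have hsys := hgeo.1
  have haτ' : ∀ τ : ℝ, τ₀ ≤ τ → a < (τ : EReal) :=
    fun τ h1 => lt_of_lt_of_le ha0 (EReal.coe_le_coe_iff.2 h1)
  -- t(τ) ≥ 1 on [τ₀, b)
  have hmono : ∀ s : ℝ, τ₀ ≤ s → (s : EReal) < b → 1 ≤ tt s := by
    intro s hs hsb
    have hτb : ∀ τ : ℝ, τ ≤ s → (τ : EReal) < b :=
      fun τ h1 => lt_of_le_of_lt (EReal.coe_le_coe_iff.2 h1) hsb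
    have hmot : MonotoneOn tt (Set.Icc τ₀ s) := by
      apply monotoneOn_of_deriv_nonneg (convex_Icc τ₀ s)
      · exact fun τ hτ =>
          ((hsys τ (haτ' τ hτ.1) (hτb τ hτ.2)).1.continuousAt).continuousWithinAt
      · intro τ hτ
        rw [interior_Icc] at hτ
        exact ((hsys τ (haτ' τ hτ.1.le) (hτb τ hτ.2.le)).1.differentiableAt).differentiableWithinAt
      · intro τ hτ
        rw [interior_Icc] at hτ
        rw [((hsys τ (haτ' τ hτ.1.le) (hτb τ hτ.2.le)).1).deriv]
        positivity
    have := hmot (Set.left_mem_Icc.2 hs) (Set.mem_Icc.2 ⟨hs, le_rfl⟩) hs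
    rwa [ht0] at this
  -- the invariant w(τ) = w₀ e^{λ(1) - λ(t(τ))}
  have hinv : ∀ s : ℝ, τ₀ ≤ s → (s : EReal) < b →
      ww s = w₀ * Real.exp (lam 1 - lam (tt s)) := by
    intro s hs hsb
    have hτb : ∀ τ : ℝ, τ ≤ s → (τ : EReal) < b :=
      fun τ h1 => lt_of_le_of_lt (EReal.coe_le_coe_iff.2 h1) hsb
    have hΨ : ∀ τ ∈ Set.Icc τ₀ s,
        HasDerivAt (fun σ => ww σ * Real.exp (lam (tt σ))) 0 τ := by
      intro τ hτ
      obtain ⟨htt, hww⟩ := hsys τ (haτ' τ hτ.1) (hτb τ hτ.2)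
      have ht1 : 1 ≤ tt τ := hmono τ hτ.1 (hτb τ hτ.2)
      have hlam : HasDerivAt lam (deriv lam (tt τ)) (tt τ) :=
        (h.reg_lam _ (indom_top ht1)).hasDerivAt
      have hcomp : HasDerivAt (fun σ => lam (tt σ)) (deriv lam (tt τ) *
          (Real.exp (-(mu (tt τ))) * Real.sqrt (m ^ 2 + ww τ ^ 2 + F / tt τ ^ 2))) τ :=
        hlam.comp τ htt
      have hmul := hww.mul hcomp.exp
      exact hmul.congr_deriv (by ring)
    have hconst : ∀ x ∈ Set.Icc τ₀ s,
        ww x * Real.exp (lam (tt x)) = ww τ₀ * Real.exp (lam (tt τ₀)) := by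
      apply constant_of_has_deriv_right_zero
      · exact fun τ hτ => ((hΨ τ hτ).continuousAt).continuousWithinAt
      · exact fun τ hτ => (hΨ τ ⟨hτ.1, hτ.2.le⟩).hasDerivWithinAt
    have h2 := hconst s ⟨hs, le_rfl⟩
    rw [ht0] at h2
    have hE : Real.exp (lam (tt s)) ≠ 0 := Real.exp_ne_zero _
    have h3 : w₀ * (Real.exp (lam 1) / Real.exp (lam (tt s)))
        = w₀ * Real.exp (lam 1) / Real.exp (lam (tt s)) := by ring
    rw [Real.exp_sub, h3, eq_div_iff hE]
    exact h2
  have hWfn : ∀ s : ℝ, τ₀ ≤ s → (s : EReal) < b → ww s = Wfn lam w₀ (tt s) := by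
    intro s h1 h2
    rw [hinv s h1 h2]
    unfold Wfn
    rw [max_eq_left (hmono s h1 h2)]
  -- key algebraic identity
  have hig_id : ∀ s : ℝ, τ₀ ≤ s → (s : EReal) < b →
      ig (tt s) * (Real.exp (-(mu (tt s))) *
        Real.sqrt (m ^ 2 + ww s ^ 2 + F / tt s ^ 2)) = 1 := by
    intro s h1 h2
    have ht1 := hmono s h1 h2
    have hmax : max (tt s) 1 = tt s := max_eq_left ht1
    have hww := hWfn s h1 h2
    have hP : Pfn lam m F w₀ (tt s) = m ^ 2 + ww s ^ 2 + F / tt s ^ 2 := by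
      unfold Pfn
      rw [hmax, hww]
    have hs0 : 0 < Real.sqrt (m ^ 2 + ww s ^ 2 + F / tt s ^ 2) := by
      rw [← hP]
      exact Real.sqrt_pos.2 (Pfn_pos hF hpos _)
    rw [higdef]
    unfold ign
    rw [hmax, hP, Real.exp_neg]
    have hE : Real.exp (mu (tt s)) ≠ 0 := Real.exp_ne_zero _
    have hX : Real.sqrt (m ^ 2 + ww s ^ 2 + F / tt s ^ 2) ≠ 0 := ne_of_gt hs0
    have hrE : Real.exp (mu (tt s)) / Real.sqrt (m ^ 2 + ww s ^ 2 + F / tt s ^ 2) *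
        ((Real.exp (mu (tt s)))⁻¹ * Real.sqrt (m ^ 2 + ww s ^ 2 + F / tt s ^ 2))
        = (Real.exp (mu (tt s)) * (Real.exp (mu (tt s)))⁻¹) *
          (Real.sqrt (m ^ 2 + ww s ^ 2 + F / tt s ^ 2) /
            Real.sqrt (m ^ 2 + ww s ^ 2 + F / tt s ^ 2)) := by
      ring
    rw [hrE, mul_inv_cancel₀ hE, div_self hX, mul_one]
  -- G(t(τ)) = τ - τ₀ on [τ₀, b)
  have hGt : ∀ s : ℝ, τ₀ ≤ s → (s : EReal) < b → G (tt s) = s - τ₀ := by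
    intro s hs hsb
    have hτb : ∀ τ : ℝ, τ ≤ s → (τ : EReal) < b :=
      fun τ h1 => lt_of_le_of_lt (EReal.coe_le_coe_iff.2 h1) hsb
    have hΦ : ∀ τ ∈ Set.Icc τ₀ s,
        HasDerivAt (fun σ => G (tt σ) - (σ - τ₀)) 0 τ := by
      intro τ hτ
      have htt := (hsys τ (haτ' τ hτ.1) (hτb τ hτ.2)).1
      have hcomp : HasDerivAt (fun σ => G (tt σ)) (ig (tt τ) *
          (Real.exp (-(mu (tt τ))) * Real.sqrt (m ^ 2 + ww τ ^ 2 + F / tt τ ^ 2))) τ :=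
        (hGd (tt τ)).comp τ htt
      have hid : HasDerivAt (fun σ : ℝ => σ - τ₀) 1 τ := (hasDerivAt_id τ).sub_const τ₀
      have hsub := hcomp.sub hid
      exact hsub.congr_deriv (by rw [hig_id τ hτ.1 (hτb τ hτ.2)]; norm_num)
    have hconst : ∀ x ∈ Set.Icc τ₀ s,
        G (tt x) - (x - τ₀) = G (tt τ₀) - (τ₀ - τ₀) := by
      apply constant_of_has_deriv_right_zero
      · exact fun τ hτ => ((hΦ τ hτ).continuousAt).continuousWithinAt
      · exact fun τ hτ => (hΦ τ ⟨hτ.1, hτ.2.le⟩).hasDerivWithinAt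
    have h2 := hconst s ⟨hs, le_rfl⟩
    rw [ht0, hG1] at h2
    linarith
  -- PART 1 : b = ⊤
  have hbtop : b = ⊤ := by
    by_contra hbne
    have hbneb : b ≠ ⊥ := fun hbb => by rw [hbb] at hb0; exact (not_lt_bot hb0)
    lift b to ℝ using ⟨hbne, hbneb⟩ with β hβ
    have higdef2 : ig = ign lam mu m F w₀ := rfl
    have hτ₀β : τ₀ < β := EReal.coe_lt_coe_iff.1 hb0
    set tt' : ℝ → ℝ := fun τ => if τ < τ₀ then tt τ else Ginv (τ - τ₀) with htt'def
    set ww' : ℝ → ℝ := fun τ => if τ < τ₀ then ww τ else Wfn lam w₀ (Ginv (τ - τ₀))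
      with hww'def
    have hagree : ∀ τ : ℝ, a < (τ : EReal) → (τ : EReal) < (β : EReal) →
        tt' τ = tt τ ∧ ww' τ = ww τ := by
      intro τ haτ hτβ
      by_cases hττ₀ : τ < τ₀
      · constructor
        · simp only [htt'def, if_pos hττ₀]
        · simp only [hww'def, if_pos hττ₀]
      · push_neg at hττ₀
        have hGtτ := hGt τ hττ₀ hτβ
        have h1 : Ginv (τ - τ₀) = tt τ := by rw [← hGtτ]; exact hGinv_left (tt τ)
        constructor
        · simp only [htt'def, if_neg (not_lt.2 hττ₀)]; exact h1
        · simp only [hww'def, if_neg (not_lt.2 hττ₀)]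
          rw [h1]
          exact (hWfn τ hττ₀ hτβ).symm
    have hsys' : GeoSysH lam mu m F a ⊤ tt' ww' := by
      intro τ haτ _
      by_cases hτβ : τ < β
      · have hopen : IsOpen {σ : ℝ | a < (σ : EReal) ∧ σ < β} := by
          have h1 : IsOpen {σ : ℝ | a < (σ : EReal)} :=
            isOpen_Ioi.preimage continuous_coe_real_ereal
          exact h1.inter isOpen_Iio
        have hnhds : {σ : ℝ | a < (σ : EReal) ∧ σ < β} ∈ nhds τ :=
          hopen.mem_nhds ⟨haτ, hτβ⟩
        have heqt : tt' =ᶠ[nhds τ] tt :=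
          Filter.eventuallyEq_of_mem hnhds
            (fun σ hσ => (hagree σ hσ.1 (EReal.coe_lt_coe_iff.2 hσ.2)).1)
        have heqw : ww' =ᶠ[nhds τ] ww :=
          Filter.eventuallyEq_of_mem hnhds
            (fun σ hσ => (hagree σ hσ.1 (EReal.coe_lt_coe_iff.2 hσ.2)).2)
        have hτb : (τ : EReal) < (β : EReal) := EReal.coe_lt_coe_iff.2 hτβ
        obtain ⟨htt1, hww1⟩ := hsys τ haτ hτb
        have he1 := (hagree τ haτ hτb).1
        have he2 := (hagree τ haτ hτb).2
        rw [he1, he2]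
        exact ⟨htt1.congr_of_eventuallyEq heqt, hww1.congr_of_eventuallyEq heqw⟩
      · push_neg at hτβ
        have hττ₀ : τ₀ < τ := lt_of_lt_of_le hτ₀β hτβ
        have hy : 0 < τ - τ₀ := by linarith
        set t : ℝ := Ginv (τ - τ₀) with htdef2
        have ht1 : 1 < t := hGinv_gt1 _ hy
        have hmax : max t 1 = t := max_eq_left ht1.le
        have hnhds : Set.Ioi τ₀ ∈ nhds τ := Ioi_mem_nhds hττ₀
        have heqt : tt' =ᶠ[nhds τ] (fun σ => Ginv (σ - τ₀)) :=
          Filter.eventuallyEq_of_mem hnhds fun σ hσ => by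
            simp only [htt'def, if_neg (not_lt.2 (le_of_lt (Set.mem_Ioi.1 hσ)))]
        have heqw : ww' =ᶠ[nhds τ] (fun σ => Wfn lam w₀ (Ginv (σ - τ₀))) :=
          Filter.eventuallyEq_of_mem hnhds fun σ hσ => by
            simp only [hww'def, if_neg (not_lt.2 (le_of_lt (Set.mem_Ioi.1 hσ)))]
        have hinner : HasDerivAt (fun σ : ℝ => Ginv (σ - τ₀)) ((ig t)⁻¹ * 1) τ :=
          by have := (hGinv_deriv _ hy).comp τ ((hasDerivAt_id τ).sub_const τ₀); exact this
        have htt'τ : tt' τ = t := by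
          simp only [htt'def, if_neg (not_lt.2 hττ₀.le)]
          rfl
        have hww'τ : ww' τ = Wfn lam w₀ t := by
          simp only [hww'def, if_neg (not_lt.2 hττ₀.le)]
          rfl
        have hPt : Pfn lam m F w₀ t = m ^ 2 + Wfn lam w₀ t ^ 2 + F / t ^ 2 := by
          unfold Pfn; rw [hmax]
        have higinv : (ig t)⁻¹
            = Real.exp (-(mu t)) * Real.sqrt (m ^ 2 + Wfn lam w₀ t ^ 2 + F / t ^ 2) := by
          rw [higdef2]
          unfold ign
          rw [hmax, inv_div, hPt, div_eq_mul_inv, ← Real.exp_neg, mul_comm]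
        constructor
        · rw [htt'τ, hww'τ]
          have h5 := hinner
          rw [mul_one, higinv] at h5
          exact h5.congr_of_eventuallyEq heqt
        · rw [htt'τ, hww'τ]
          have hlamd : HasDerivAt lam (deriv lam t) t :=
            (h.reg_lam t (indom_top ht1.le)).hasDerivAt
          have hWd0 : HasDerivAt (fun s => w₀ * Real.exp (lam 1 - lam s))
              (w₀ * (Real.exp (lam 1 - lam t) * (0 - deriv lam t))) t :=
            (((hasDerivAt_const t (lam 1)).sub hlamd).exp).const_mul w₀
          have hWeq : Wfn lam w₀ =ᶠ[nhds t] (fun s => w₀ * Real.exp (lam 1 - lam s)) :=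
            Filter.eventuallyEq_of_mem (Ioi_mem_nhds ht1) fun s hs => by
              unfold Wfn; rw [max_eq_left (le_of_lt hs)]
          have hWd : HasDerivAt (Wfn lam w₀)
              (w₀ * (Real.exp (lam 1 - lam t) * (0 - deriv lam t))) t :=
            hWd0.congr_of_eventuallyEq hWeq
          have hcomp : HasDerivAt (fun σ : ℝ => Wfn lam w₀ (Ginv (σ - τ₀)))
              ((w₀ * (Real.exp (lam 1 - lam t) * (0 - deriv lam t))) * ((ig t)⁻¹ * 1)) τ :=
            by have := hWd.comp τ hinner; exact this
          have h6 := hcomp.congr_of_eventuallyEq heqw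
          refine h6.congr_deriv ?_
          rw [higinv]
          unfold Wfn
          rw [hmax]
          ring
    exact (hgeo.2 ⊤ tt' ww' (EReal.coe_lt_top β) hsys')
      (fun τ h1 h2 => hagree τ h1 h2)
  -- PART 2 : the proper-time integral diverges
  refine ⟨hbtop, ?_⟩
  intro W hW
  have hWeq : ∀ t : ℝ, 1 ≤ t → W t = Wfn lam w₀ t := by
    intro t ht
    have hGge : 0 ≤ G t := by rw [← hG1]; exact hGsm.monotone ht
    have hτ1 : τ₀ ≤ τ₀ + G t := by linarith
    have hτb : ((τ₀ + G t : ℝ) : EReal) < b := by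
      rw [hbtop]; exact EReal.coe_lt_top _
    have haτ : a < ((τ₀ + G t : ℝ) : EReal) := haτ' _ hτ1
    have h1 : G (tt (τ₀ + G t)) = G t := by
      rw [hGt _ hτ1 hτb]; ring
    have h2 : tt (τ₀ + G t) = t := hGsm.injective h1
    have h3 := hW _ haτ hτb
    rw [h2] at h3
    rw [h3, hWfn _ hτ1 hτb, h2]
  have hinteq : ∀ᶠ x in Filter.atTop,
      (∫ t in (1:ℝ)..x, Real.exp (mu t) / Real.sqrt (m ^ 2 + W t ^ 2 + F / t ^ 2))
        = G x := by
    filter_upwards [Filter.eventually_ge_atTop (1:ℝ)] with x hx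
    rw [hGdef]
    unfold Gn
    apply intervalIntegral.integral_congr
    intro t htx
    rw [Set.uIcc_of_le hx] at htx
    have ht1 : 1 ≤ t := htx.1
    show Real.exp (mu t) / Real.sqrt (m ^ 2 + W t ^ 2 + F / t ^ 2)
      = ign lam mu m F w₀ t
    rw [hWeq t ht1]
    unfold ign Pfn
    rw [max_eq_left ht1]
  have h7 : (fun x => ∫ t in (1:ℝ)..x,
      Real.exp (mu t) / Real.sqrt (m ^ 2 + W t ^ 2 + F / t ^ 2)) =ᶠ[Filter.atTop] G :=
    hinteq
  exact hGtop.congr' h7.symm
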